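/- For every fixed y ∈ G, the map β ↦ h_β(y; ẏ) is convex on (0, +∞), and for all 0 < β̄ ≤ β̃ one has h_{β̄}(y; ẏ) ≤ h_{β̃}(y; ẏ) + ((β̃ − β̄)/2)‖y*_{β̄}(y; ẏ) − ẏ‖²_S. -/

import Mathlib

open scoped Classical
open scoped RealInnerProductSpace

/-- for fixed `y`, `β ↦ h_β(y; ẏ)` is convex on `(0,∞)` and for
`0 < β̄ ≤ β̃` one has `h_β̄(y;ẏ) ≤ h_β̃(y;ẏ) + ((β̃−β̄)/2)‖y*_β̄(y;ẏ) − ẏ‖²_S`. -/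
theorem stmt2
    {G : Type*} [NormedAddCommGroup G] [InnerProductSpace ℝ G] [CompleteSpace G]
    (S : G →L[ℝ] G)
    (hS_sym : ∀ x y : G, ⟪S x, y⟫ = ⟪x, S y⟫)
    (σ : ℝ) (hσ : 0 < σ) (hSpos : ∀ y : G, σ * ‖y‖ ^ 2 ≤ ⟪y, S y⟫)
    (domφ : Set G) (φ : G → ℝ)
    (hdom_ne : domφ.Nonempty) (hdom_cvx : Convex ℝ domφ)
    (hφ_cvx : ConvexOn ℝ domφ φ)
    (hφ_lsc : LowerSemicontinuous fun z => if z ∈ domφ then ((φ z : EReal)) else (⊤ : EReal))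
    (ydot : G) (ystar : ℝ → G → G) (hsm : ℝ → G → ℝ)
    (hmax_mem : ∀ β : ℝ, 0 < β → ∀ y : G, ystar β y ∈ domφ)
    (hmax : ∀ β : ℝ, 0 < β → ∀ y : G, ∀ z ∈ domφ,
      ⟪y, z⟫ - φ z - β / 2 * ⟪z - ydot, S (z - ydot)⟫ ≤
        ⟪y, ystar β y⟫ - φ (ystar β y) - β / 2 * ⟪ystar β y - ydot, S (ystar β y - ydot)⟫)
    (hsm_def : ∀ β : ℝ, 0 < β → ∀ y : G,
      hsm β y = ⟪y, ystar β y⟫ - φ (ystar β y)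
        - β / 2 * ⟪ystar β y - ydot, S (ystar β y - ydot)⟫)
    :
    ∀ y : G,
      ConvexOn ℝ (Set.Ioi (0 : ℝ)) (fun b => hsm b y) ∧
      ∀ βb βt : ℝ, 0 < βb → βb ≤ βt →
        hsm βb y ≤ hsm βt y
          + (βt - βb) / 2 * ⟪ystar βb y - ydot, S (ystar βb y - ydot)⟫ := by
  intro y
  -- the affine-in-β objective
  set f : ℝ → G → ℝ := fun β z => ⟪y, z⟫ - φ z - β / 2 * ⟪z - ydot, S (z - ydot)⟫ with hf
  have key : ∀ β : ℝ, 0 < β → hsm β y = f β (ystar β y) := fun β hβ => hsm_def β hβ y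
  have hub : ∀ β : ℝ, 0 < β → ∀ z ∈ domφ, f β z ≤ hsm β y := by
    intro β hβ z hz
    rw [key β hβ]
    exact hmax β hβ y z hz
  constructor
  · refine ⟨convex_Ioi 0, ?_⟩
    intro β1 hβ1 β2 hβ2 a b ha hb hab
    simp only [Set.mem_Ioi] at hβ1 hβ2
    simp only [smul_eq_mul]
    have hpos : 0 < a * β1 + b * β2 := by
      rcases ha.lt_or_eq with h | h
      · nlinarith [mul_nonneg hb hβ2.le]
      · have hb1 : b = 1 := by linarith
        rw [← h, hb1]; simpa using hβ2
    have hzmem : ystar (a * β1 + b * β2) y ∈ domφ := hmax_mem _ hpos y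
    have h1 : f β1 (ystar (a * β1 + b * β2) y) ≤ hsm β1 y := hub β1 hβ1 _ hzmem
    have h2 : f β2 (ystar (a * β1 + b * β2) y) ≤ hsm β2 y := hub β2 hβ2 _ hzmem
    have heq : hsm (a * β1 + b * β2) y
        = a * f β1 (ystar (a * β1 + b * β2) y) + b * f β2 (ystar (a * β1 + b * β2) y) := by
      rw [key _ hpos]
      simp only [hf]
      have hb1 : b = 1 - a := by linarith
      subst hb1; ring
    calc hsm (a * β1 + b * β2) y
        = a * f β1 (ystar (a * β1 + b * β2) y) + b * f β2 (ystar (a * β1 + b * β2) y) := heq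
      _ ≤ a * hsm β1 y + b * hsm β2 y := by
          gcongr <;> assumption
  · intro βb βt hβb hle
    have hβt : 0 < βt := lt_of_lt_of_le hβb hle
    have hzmem : ystar βb y ∈ domφ := hmax_mem βb hβb y
    have h1 : f βt (ystar βb y) ≤ hsm βt y := hub βt hβt _ hzmem
    have heq : hsm βb y
        = f βt (ystar βb y) + (βt - βb) / 2 * ⟪ystar βb y - ydot, S (ystar βb y - ydot)⟫ := by
      rw [key βb hβb]; simp only [hf]; ring
    rw [heq]
    exact add_le_add_left h1 _
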